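/- arXiv:0911.4724 — 4 statements merged into one kernel-verified Lean document; each statement's English description precedes it below -/
import Mathlib

section
/- Dickson's theorem: for any symmetric matrix B over Z_2 of size n with zero diagonal, there exists an invertible matrix R ∈ GL(n, Z_2) and h ≤ n/2 such that R B Rᵗ is the block-diagonal matrix consisting of h copies of the 2×2 matrix [[0,1],[1,0]] followed by an (n−2h)×(n−2h) zero block. -/
open Matrix

private lemma zmod2_two_cases : ∀ x : ZMod 2, x = 0 ∨ x = 1 := by decide
private lemma zmod2_add_eq_zero : ∀ a b : ZMod 2, a + b = 0 → a = b := by decide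

private lemma xor1_even (m : ℕ) : (2*m) ^^^ 1 = 2*m+1 := by
  have h1 : (1:ℕ) = Nat.bit true 0 := by simp [Nat.bit_val]
  have h2 : (2*m:ℕ) = Nat.bit false m := by simp [Nat.bit_val]
  rw [h2, h1, Nat.xor_bit]
  simp [Nat.bit_val]

private lemma xor1_odd (m : ℕ) : (2*m+1) ^^^ 1 = 2*m := by
  have h1 : (1:ℕ) = Nat.bit true 0 := by simp [Nat.bit_val]
  have h2 : (2*m+1:ℕ) = Nat.bit true m := by simp [Nat.bit_val]
  rw [h2, h1, Nat.xor_bit]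
  simp [Nat.bit_val]

private lemma xor1_add_two (k : ℕ) : (k+2) ^^^ 1 = (k ^^^ 1) + 2 := by
  rcases Nat.even_or_odd k with ⟨m, hm⟩ | ⟨m, hm⟩
  · subst hm
    rw [show m+m+2 = 2*(m+1) by ring, show m+m = 2*m by ring, xor1_even, xor1_even]
    omega
  · subst hm
    rw [show 2*m+1+2 = 2*(m+1)+1 by ring, xor1_odd, xor1_odd]
    omega

private lemma key (n : ℕ) : ∀ (V : Type) [AddCommGroup V] [Module (ZMod 2) V]
    [FiniteDimensional (ZMod 2) V], Module.finrank (ZMod 2) V = n →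
    ∀ Φ : LinearMap.BilinForm (ZMod 2) V, (∀ x, Φ x x = 0) →
    ∃ (v : Module.Basis (Fin n) (ZMod 2) V) (h : ℕ), 2 * h ≤ n ∧
      ∀ i j : Fin n, Φ (v i) (v j) =
        (if (i : ℕ) < 2 * h ∧ (j : ℕ) = (i : ℕ) ^^^ 1 then 1 else 0) := by
  induction n using Nat.strong_induction_on with
  | _ n IH =>
  intro V _ _ _ hn Φ halt
  -- symmetry
  have hsym : ∀ x y : V, Φ x y = Φ y x := by
    intro x y
    have h := halt (x + y)
    simp only [map_add, LinearMap.add_apply, halt] at h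
    apply zmod2_add_eq_zero
    rw [← h]; ring
  by_cases hzero : ∀ x y : V, Φ x y = 0
  · exact ⟨(Module.finBasis (ZMod 2) V).reindex (finCongr hn), 0,
      by omega, fun i j => by simp [hzero]⟩
  push_neg at hzero
  obtain ⟨u, w, huw0⟩ := hzero
  have huw : Φ u w = 1 := (zmod2_two_cases _).resolve_left huw0
  have hwu : Φ w u = 1 := by rw [hsym]; exact huw
  -- the span of u, w
  have hindep : LinearIndependent (ZMod 2) ![u, w] := by
    rw [LinearIndependent.pair_iff]
    intro s t hst
    have h1 := congrArg (Φ w) hst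
    have h2 := congrArg (Φ u) hst
    simp only [map_add, _root_.map_smul, huw, hwu, halt, smul_eq_mul, mul_one, mul_zero,
      add_zero, zero_add, map_zero, smul_zero] at h1 h2
    exact ⟨h1, h2⟩
  set p : Submodule (ZMod 2) V := Submodule.span (ZMod 2) (Set.range ![u, w]) with hp
  have hrange : Set.range ![u, w] = {u, w} := by
    ext x
    simp [Fin.exists_fin_two]
    tauto
  have hmemp : ∀ x : V, x ∈ p ↔ ∃ a b : ZMod 2, a • u + b • w = x := by
    intro x
    rw [hp, hrange, Submodule.mem_span_pair]
  set W : Submodule (ZMod 2) V := LinearMap.ker (Φ u) ⊓ LinearMap.ker (Φ w) with hW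
  have hmemW : ∀ x : V, x ∈ W ↔ Φ u x = 0 ∧ Φ w x = 0 := by
    intro x
    rw [hW, Submodule.mem_inf, LinearMap.mem_ker, LinearMap.mem_ker]
  have hcompl : IsCompl p W := by
    constructor
    · rw [Submodule.disjoint_def]
      intro x hxp hxW
      obtain ⟨a, b, rfl⟩ := (hmemp x).1 hxp
      obtain ⟨h1, h2⟩ := (hmemW _).1 hxW
      simp only [map_add, _root_.map_smul, huw, hwu, halt, smul_eq_mul, mul_one, mul_zero,
        add_zero, zero_add] at h1 h2
      rw [h1, h2, zero_smul, zero_smul, add_zero]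
    · rw [codisjoint_iff_le_sup]
      intro x _
      rw [Submodule.mem_sup]
      refine ⟨Φ w x • u + Φ u x • w, (hmemp _).2 ⟨_, _, rfl⟩,
        x - (Φ w x • u + Φ u x • w), (hmemW _).2 ⟨?_, ?_⟩, by abel⟩
      · simp only [map_sub, map_add, _root_.map_smul, huw, halt, smul_eq_mul, mul_one,
          mul_zero, zero_add, add_zero]
        ring
      · simp only [map_sub, map_add, _root_.map_smul, hwu, halt, smul_eq_mul, mul_one,
          mul_zero, zero_add, add_zero]
        ring
  have hrankp : Module.finrank (ZMod 2) p = 2 := by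
    rw [hp, finrank_span_eq_card hindep]
    simp
  have hranksum := Submodule.finrank_add_eq_of_isCompl hcompl
  rw [hn, hrankp] at hranksum
  have hn2 : 2 ≤ n := by omega
  have hrankW : Module.finrank (ZMod 2) W = n - 2 := by omega
  -- restrict to W and apply the induction hypothesis
  obtain ⟨f, h', hh', hf⟩ := IH (n - 2) (by omega) W hrankW (Φ.restrict W)
    (fun x => halt x)
  -- build the combined basis
  set σ : (Fin 2 ⊕ Fin (n - 2)) ≃ Fin n :=
    finSumFinEquiv.trans (finCongr (by omega)) with hσ
  set bp : Module.Basis (Fin 2) (ZMod 2) p := Module.Basis.span hindep with hbp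
  set e := p.prodEquivOfIsCompl W hcompl with he
  set v : Module.Basis (Fin n) (ZMod 2) V := ((bp.prod f).map e).reindex σ with hv
  have hval_l : ∀ i : Fin 2, ((σ (Sum.inl i)) : ℕ) = (i : ℕ) := by
    intro i; simp [hσ]
  have hval_r : ∀ k : Fin (n - 2), ((σ (Sum.inr k)) : ℕ) = 2 + (k : ℕ) := by
    intro k; simp [hσ]
  have happly_l : ∀ i : Fin 2, v (σ (Sum.inl i)) = ((bp i : V)) := by
    intro i
    rw [hv, Module.Basis.reindex_apply, Equiv.symm_apply_apply, Module.Basis.map_apply,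
      Module.Basis.prod_apply]
    simp [he, Submodule.coe_prodEquivOfIsCompl']
  have happly_r : ∀ k : Fin (n - 2), v (σ (Sum.inr k)) = ((f k : V)) := by
    intro k
    rw [hv, Module.Basis.reindex_apply, Equiv.symm_apply_apply, Module.Basis.map_apply,
      Module.Basis.prod_apply]
    simp [he, Submodule.coe_prodEquivOfIsCompl']
  have hb : ∀ i : Fin 2, ((bp i : V)) = ![u, w] i := by
    intro i; rw [hbp]; exact congrArg Subtype.val (Module.Basis.span_apply hindep i)
  have hfW : ∀ k, Φ u (f k) = 0 ∧ Φ w (f k) = 0 := fun k => (hmemW _).1 (f k).2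
  refine ⟨v, h' + 1, by omega, ?_⟩
  intro i j
  obtain ⟨a, rfl⟩ := σ.surjective i
  obtain ⟨b, rfl⟩ := σ.surjective j
  cases a with
  | inl i =>
    cases b with
    | inl j =>
      rw [happly_l, happly_l, hval_l, hval_l]
      rw [hb, hb]
      have hpos0 : 0 < 2 * (h' + 1) := by omega
      have hpos1 : 1 < 2 * (h' + 1) := by omega
      have e01 : (0:ℕ) ^^^ 1 = 1 := rfl
      have e10 : (1:ℕ) ^^^ 1 = 0 := rfl
      fin_cases i <;> fin_cases j <;>
        simp [huw, hwu, halt, hpos0, hpos1, e01, e10]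
    | inr l =>
      rw [happly_l, happly_r, hval_l, hval_r]
      have h0 : Φ ((bp i : V)) ((f l : V)) = 0 := by
        rw [hb]
        fin_cases i
        · simpa using (hfW l).1
        · simpa using (hfW l).2
      rw [h0]
      have : ¬ (2 + (l : ℕ) = (i : ℕ) ^^^ 1) := by
        fin_cases i <;> simp <;> omega
      simp [this]
  | inr k =>
    cases b with
    | inl j =>
      rw [happly_r, happly_l, hval_r, hval_l]
      have h0 : Φ ((f k : V)) ((bp j : V)) = 0 := by
        rw [hb, hsym]
        fin_cases j
        · simpa using (hfW k).1
        · simpa using (hfW k).2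
      rw [h0]
      have hx : (2 + (k : ℕ)) ^^^ 1 = ((k : ℕ) ^^^ 1) + 2 := by
        rw [add_comm]; exact xor1_add_two k
      have : ¬ ((j : ℕ) = (2 + (k : ℕ)) ^^^ 1) := by
        rw [hx]; have := j.isLt; omega
      simp [this]
    | inr l =>
      rw [happly_r, happly_r, hval_r, hval_r]
      have hres := hf k l
      simp only [LinearMap.BilinForm.restrict_apply, LinearMap.domRestrict_apply] at hres
      rw [hres]
      have hx : (2 + (k : ℕ)) ^^^ 1 = ((k : ℕ) ^^^ 1) + 2 := by
        rw [add_comm]; exact xor1_add_two k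
      have hiff : ((2 + (k : ℕ)) < 2 * (h' + 1) ∧ (2 + (l : ℕ)) = (2 + (k : ℕ)) ^^^ 1)
          ↔ ((k : ℕ) < 2 * h' ∧ (l : ℕ) = (k : ℕ) ^^^ 1) := by
        rw [hx]; omega
      rw [if_congr hiff rfl rfl]

/-- Dickson's theorem: a symmetric matrix over `Z_2` with zero diagonal is congruent
to a direct sum of `h` copies of `[[0,1],[1,0]]` and a zero block. The `i`-th row of
the canonical form has a `1` exactly in column `i ^^^ 1` (its partner in the pair),
provided `i < 2*h`. -/
theorem dickson (n : ℕ) (B : Matrix (Fin n) (Fin n) (ZMod 2))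
    (hsymm : B.IsSymm) (hdiag : ∀ i, B i i = 0) :
    ∃ (R : Matrix (Fin n) (Fin n) (ZMod 2)) (h : ℕ), IsUnit R ∧ 2 * h ≤ n ∧
      R * B * Rᵀ = Matrix.of (fun i j : Fin n =>
        if i.val < 2 * h ∧ j.val = i.val ^^^ 1 then 1 else 0) := by
  set Φ : LinearMap.BilinForm (ZMod 2) (Fin n → ZMod 2) := Matrix.toBilin' B with hΦ
  have halt : ∀ x : Fin n → ZMod 2, Φ x x = 0 := by
    intro x
    rw [hΦ, Matrix.toBilin'_apply']
    simp only [dotProduct, Matrix.mulVec, Finset.mul_sum]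
    rw [← Finset.sum_product']
    apply Finset.sum_involution (fun p _ => (p.2, p.1))
    · intro p _
      show x p.1 * (B p.1 p.2 * x p.2) + x p.2 * (B p.2 p.1 * x p.1) = 0
      have hs : B p.2 p.1 = B p.1 p.2 := by
        exact hsymm.apply p.1 p.2
      rw [hs]
      have : ∀ a : ZMod 2, a + a = 0 := by decide
      rw [show x p.2 * (B p.1 p.2 * x p.1) = x p.1 * (B p.1 p.2 * x p.2) by ring]
      exact this _
    · intro p _ hne
      intro hcon
      apply hne
      have : p.2 = p.1 := congrArg Prod.fst hcon
      show x p.1 * (B p.1 p.2 * x p.2) = 0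
      rw [show p.2 = p.1 from this, hdiag]
      ring
    · intro p _; exact Finset.mem_product.2 ⟨Finset.mem_univ _, Finset.mem_univ _⟩
    · intro p _; rfl
  obtain ⟨v, h, hh, hv⟩ := key n (Fin n → ZMod 2) (by simp) Φ halt
  set R : Matrix (Fin n) (Fin n) (ZMod 2) := Matrix.of (fun i j => v i j) with hR
  have hRT : (Pi.basisFun (ZMod 2) (Fin n)).toMatrix ⇑v = Rᵀ := by
    ext i j
    simp [Module.Basis.toMatrix_apply, hR]
  have hunit : IsUnit R := by
    rw [Matrix.isUnit_iff_isUnit_det, ← Matrix.det_transpose]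
    have h1 := Module.Basis.toMatrix_mul_toMatrix_flip (Pi.basisFun (ZMod 2) (Fin n)) v
    rw [hRT] at h1
    have hd := congrArg Matrix.det h1
    rw [Matrix.det_mul, Matrix.det_one] at hd
    exact IsUnit.of_mul_eq_one _ hd
  refine ⟨R, h, hunit, hh, ?_⟩
  ext i j
  have hentry : (R * B * Rᵀ) i j = Φ (v i) (v j) := by
    rw [hΦ, Matrix.toBilin'_apply']
    simp only [Matrix.mul_apply, Matrix.transpose_apply, dotProduct,
      Matrix.mulVec, Finset.sum_mul, Finset.mul_sum, hR, Matrix.of_apply]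
    rw [Finset.sum_comm]
    apply Finset.sum_congr rfl
    intro k _
    apply Finset.sum_congr rfl
    intro l _
    ring
  rw [hentry, hv i j, Matrix.of_apply]
end

section
/- Let f(x) = xQxᵗ + Lxᵗ be a quadratic Boolean function on Z_2^n with Q upper triangular with zero diagonal, and suppose B = Q + Qᵗ has full rank n. Then f is bent. -/
open Finset Matrix

/-- Fourier coefficient of the Boolean function `f` at frequency `w`. -/
noncomputable def fhat {n : ℕ} (f : (Fin n → ZMod 2) → ZMod 2) (w : Fin n → ZMod 2) : ℝ :=
  (2 ^ n : ℝ)⁻¹ * ∑ x : Fin n → ZMod 2, (-1 : ℝ) ^ ((w ⬝ᵥ x + f x).val)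

noncomputable def chi (a : ZMod 2) : ℝ := (-1 : ℝ) ^ a.val

lemma chi_zero : chi 0 = 1 := rfl

lemma chi_add (a b : ZMod 2) : chi (a + b) = chi a * chi b := by
  simp only [chi, ZMod.val_add, ← pow_add]
  exact (neg_one_pow_eq_pow_mod_two (R := ℝ) _).symm

lemma chi_sum {ι : Type*} (s : Finset ι) (g : ι → ZMod 2) :
    chi (∑ i ∈ s, g i) = ∏ i ∈ s, chi (g i) := by
  classical
  induction s using Finset.induction with
  | empty => simp [chi_zero]
  | insert _ _ h ih => rw [Finset.sum_insert h, Finset.prod_insert h, chi_add, ih]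

lemma sum_chi_dot (n : ℕ) (v : Fin n → ZMod 2) :
    ∑ x : Fin n → ZMod 2, chi (v ⬝ᵥ x) = if v = 0 then (2:ℝ)^n else 0 := by
  classical
  have h1 : ∀ x : Fin n → ZMod 2, chi (v ⬝ᵥ x) = ∏ i, chi (v i * x i) := by
    intro x; exact chi_sum _ _
  have h2 : (∑ x : Fin n → ZMod 2, ∏ i, chi (v i * x i))
      = ∏ i, ∑ t : ZMod 2, chi (v i * t) := by
    rw [Finset.prod_univ_sum]
    apply Fintype.sum_equiv (Equiv.refl _) <;> simp
  have hfac : ∀ i, (∑ t : ZMod 2, chi (v i * t)) = 1 + chi (v i) := by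
    intro i
    rw [show (univ : Finset (ZMod 2)) = {0, 1} from rfl]
    simp [chi_zero]
  simp only [h1, h2, hfac]
  by_cases hv : v = 0
  · subst hv; simp [chi_zero]; norm_num
  · obtain ⟨i, hi⟩ := Function.ne_iff.mp hv
    have hone : v i = 1 := by
      have : ∀ a : ZMod 2, a ≠ 0 → a = 1 := by decide
      exact this _ hi
    rw [if_neg hv]
    apply Finset.prod_eq_zero (Finset.mem_univ i)
    rw [hone]; norm_num [chi, ZMod.val_one]

lemma mulVec_inj_of_rank (n : ℕ) (B : Matrix (Fin n) (Fin n) (ZMod 2)) (h : B.rank = n)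
    (v : Fin n → ZMod 2) (hv : B.mulVec v = 0) : v = 0 := by
  have hfin : Module.finrank (ZMod 2) (Fin n → ZMod 2) = n := by
    simp [Module.finrank_pi]
  have hsurj : Function.Surjective B.mulVecLin := by
    rw [← LinearMap.range_eq_top]
    apply Submodule.eq_top_of_finrank_eq
    rw [hfin]; exact h
  have hinj : Function.Injective B.mulVecLin :=
    (LinearMap.injective_iff_surjective).mpr hsurj
  have : B.mulVecLin v = B.mulVecLin 0 := by simpa using hv
  simpa using hinj this

lemma key_identity (n : ℕ) (Q : Matrix (Fin n) (Fin n) (ZMod 2)) (L : Fin n → ZMod 2)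
    (w x h : Fin n → ZMod 2) :
    (w ⬝ᵥ x + (x ⬝ᵥ Q.mulVec x + L ⬝ᵥ x)) +
      (w ⬝ᵥ (x + h) + ((x + h) ⬝ᵥ Q.mulVec (x + h) + L ⬝ᵥ (x + h)))
    = (w ⬝ᵥ h + (h ⬝ᵥ Q.mulVec h + L ⬝ᵥ h)) + x ⬝ᵥ (Q + Qᵀ).mulVec h := by
  have swap : x ⬝ᵥ Qᵀ.mulVec h = h ⬝ᵥ Q.mulVec x := by
    rw [Matrix.mulVec_transpose, dotProduct_comm, ← Matrix.dotProduct_mulVec]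
  simp only [Matrix.mulVec_add, Matrix.add_mulVec, dotProduct_add,
    add_dotProduct, swap]
  ring_nf
  simp [show (2:ZMod 2) = 0 from rfl]

/-- A quadratic Boolean function `f(x) = x Q xᵗ + L xᵗ` whose associated symplectic
matrix `B = Q + Qᵗ` has full rank is a bent function. -/
theorem quadratic_full_rank_bent (n : ℕ) (Q : Matrix (Fin n) (Fin n) (ZMod 2))
    (L : Fin n → ZMod 2) (hQ : ∀ i j : Fin n, j ≤ i → Q i j = 0)
    (hrank : (Q + Qᵀ).rank = n) :
    ∀ w, |fhat (fun x => x ⬝ᵥ Q.mulVec x + L ⬝ᵥ x) w| = (Real.sqrt 2 ^ n)⁻¹ := by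
  intro w
  classical
  set g : (Fin n → ZMod 2) → ZMod 2 :=
    fun x => w ⬝ᵥ x + (x ⬝ᵥ Q.mulVec x + L ⬝ᵥ x) with hg
  set S : ℝ := ∑ x : Fin n → ZMod 2, chi (g x) with hS
  have hfhat : fhat (fun x => x ⬝ᵥ Q.mulVec x + L ⬝ᵥ x) w = (2 ^ n : ℝ)⁻¹ * S := rfl
  have hSsq : S ^ 2 = 2 ^ n := by
    have step1 : S ^ 2 = ∑ x : Fin n → ZMod 2, ∑ h : Fin n → ZMod 2,
        chi (g x + g (x + h)) := by
      rw [sq, hS, Finset.sum_mul_sum]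
      refine Finset.sum_congr rfl fun x _ => ?_
      rw [← Equiv.sum_comp (Equiv.addLeft x) (fun y => chi (g x) * chi (g y))]
      refine Finset.sum_congr rfl fun h _ => ?_
      simp [chi_add]
    have step2 : ∀ x h : Fin n → ZMod 2,
        chi (g x + g (x + h)) = chi (g h) * chi ((Q + Qᵀ).mulVec h ⬝ᵥ x) := by
      intro x h
      rw [hg]
      simp only
      rw [key_identity n Q L w x h, chi_add]
      congr 1
      exact congrArg chi (dotProduct_comm _ _)
    simp only [step2] at step1
    rw [Finset.sum_comm] at step1
    have step3 : ∀ h : Fin n → ZMod 2,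
        (∑ x : Fin n → ZMod 2, chi (g h) * chi ((Q + Qᵀ).mulVec h ⬝ᵥ x))
        = chi (g h) * (if h = 0 then (2:ℝ)^n else 0) := by
      intro h
      rw [← Finset.mul_sum, sum_chi_dot]
      congr 1
      by_cases h0 : h = 0
      · subst h0; simp
      · rw [if_neg fun hc => h0 (mulVec_inj_of_rank n _ hrank h hc), if_neg h0]
    simp only [step3] at step1
    have hsplit : ∀ x : Fin n → ZMod 2,
        chi (g x) * (if x = 0 then (2:ℝ)^n else 0)
        = if x = 0 then chi (g x) * (2:ℝ)^n else 0 := by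
      intro x; split <;> simp
    simp only [hsplit] at step1
    rw [step1, Finset.sum_ite_eq' univ (0 : Fin n → ZMod 2)
      (fun h => chi (g h) * (2:ℝ)^n)]
    simp [hg, chi_zero]
  have hSsq' : (fhat (fun x => x ⬝ᵥ Q.mulVec x + L ⬝ᵥ x) w) ^ 2 = ((2:ℝ) ^ n)⁻¹ := by
    rw [hfhat, mul_pow, hSsq, sq, mul_assoc, inv_mul_cancel₀ (by positivity), mul_one]
  have h2 : ((Real.sqrt 2 ^ n)⁻¹ : ℝ) ^ 2 = ((2:ℝ) ^ n)⁻¹ := by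
    rw [inv_pow]
    congr 1
    rw [← pow_mul, mul_comm n 2, pow_mul, Real.sq_sqrt (by norm_num)]
  have habs : |fhat (fun x => x ⬝ᵥ Q.mulVec x + L ⬝ᵥ x) w| ^ 2
      = ((Real.sqrt 2 ^ n)⁻¹ : ℝ) ^ 2 := by
    rw [sq_abs, hSsq', h2]
  have hnn : (0:ℝ) ≤ (Real.sqrt 2 ^ n)⁻¹ := by positivity
  nlinarith [abs_nonneg (fhat (fun x => x ⬝ᵥ Q.mulVec x + L ⬝ᵥ x) w), hnn, habs]
end

section
/- For a quadratic Boolean function f(x) = xQxᵗ + Lxᵗ with B = Q + Qᵗ of rank 2h, the Fourier coefficient f̂(w) is nonzero for exactly 2^{2h} values of w, and each nonzero coefficient has absolute value 2^{-h}. -/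
open Finset Matrix
open scoped Classical

/-! ### Auxiliary material -/

/-- The real character `a ↦ (-1)^a` on `ZMod 2`. -/
noncomputable def qchi (a : ZMod 2) : ℝ := (-1 : ℝ) ^ a.val

lemma qchi_add (a b : ZMod 2) : qchi (a + b) = qchi a * qchi b := by
  unfold qchi
  rw [ZMod.val_add, ← pow_add, neg_one_pow_eq_pow_mod_two (n := a.val + b.val)]

lemma qchi_zero : qchi 0 = 1 := by simp [qchi]

lemma qchi_one : qchi 1 = -1 := by
  norm_num [qchi, show ((1:ZMod 2)).val = 1 from rfl]

lemma qchi_add_one (a : ZMod 2) : qchi (a + 1) = - qchi a := by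
  rw [qchi_add, qchi_one]; ring

lemma sum_qchi_dot {n : ℕ} (v : Fin n → ZMod 2) (hv : v ≠ 0) :
    ∑ x : Fin n → ZMod 2, qchi (x ⬝ᵥ v) = 0 := by
  obtain ⟨i, hi⟩ : ∃ i, v i ≠ 0 := by
    by_contra hc; push_neg at hc; exact hv (funext hc)
  have hvi : v i = 1 := by
    have : ∀ a : ZMod 2, a ≠ 0 → a = 1 := by decide
    exact this _ hi
  have key : ∑ x : Fin n → ZMod 2, qchi (x ⬝ᵥ v)
      = ∑ x : Fin n → ZMod 2, qchi ((x + Pi.single i 1) ⬝ᵥ v) :=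
    (Fintype.sum_equiv (Equiv.addRight (Pi.single i 1))
      (fun x => qchi ((x + Pi.single i 1) ⬝ᵥ v)) (fun x => qchi (x ⬝ᵥ v))
      (fun x => rfl)).symm
  have key2 : ∀ x : Fin n → ZMod 2, qchi ((x + Pi.single i 1) ⬝ᵥ v) = - qchi (x ⬝ᵥ v) := by
    intro x
    rw [add_dotProduct, single_dotProduct, hvi, mul_one, qchi_add_one]
  simp only [key2] at key
  rw [Finset.sum_neg_distrib] at key
  linarith

lemma sum_qchi_dot_ite {n : ℕ} (v : Fin n → ZMod 2) :
    ∑ x : Fin n → ZMod 2, qchi (x ⬝ᵥ v) = if v = 0 then (2:ℝ)^n else 0 := by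
  split_ifs with hv
  · subst hv
    simp [dotProduct_zero, qchi_zero, Finset.card_univ]
  · exact sum_qchi_dot v hv

/-- Key additive identity for `g x = w ⬝ᵥ x + (x ⬝ᵥ Q *ᵥ x + L ⬝ᵥ x)`. -/
lemma key_id {n : ℕ} (Q : Matrix (Fin n) (Fin n) (ZMod 2)) (L w x z : Fin n → ZMod 2) :
    w ⬝ᵥ (x + z) + ((x + z) ⬝ᵥ Q *ᵥ (x + z) + L ⬝ᵥ (x + z)) =
      (w ⬝ᵥ x + (x ⬝ᵥ Q *ᵥ x + L ⬝ᵥ x)) + (w ⬝ᵥ z + (z ⬝ᵥ Q *ᵥ z + L ⬝ᵥ z))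
        + x ⬝ᵥ (Q + Qᵀ) *ᵥ z := by
  have h1 : z ⬝ᵥ Q *ᵥ x = x ⬝ᵥ Qᵀ *ᵥ z := by
    rw [Matrix.mulVec_transpose, Matrix.dotProduct_mulVec, dotProduct_comm]
  simp only [Matrix.mulVec_add, Matrix.add_mulVec, dotProduct_add, add_dotProduct]
  rw [h1]
  ring

/-- The exponential sum squared, as a sum over the kernel of `Q + Qᵀ`. -/
lemma S_sq {n : ℕ} (Q : Matrix (Fin n) (Fin n) (ZMod 2)) (L w : Fin n → ZMod 2) :
    (∑ x : Fin n → ZMod 2, qchi (w ⬝ᵥ x + (x ⬝ᵥ Q *ᵥ x + L ⬝ᵥ x))) ^ 2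
      = (2:ℝ)^n * ∑ z ∈ Finset.univ.filter (fun z : Fin n → ZMod 2 => (Q + Qᵀ) *ᵥ z = 0),
          qchi (w ⬝ᵥ z + (z ⬝ᵥ Q *ᵥ z + L ⬝ᵥ z)) := by
  set g : (Fin n → ZMod 2) → ZMod 2 := fun x => w ⬝ᵥ x + (x ⬝ᵥ Q *ᵥ x + L ⬝ᵥ x) with hg
  have step1 : (∑ x : Fin n → ZMod 2, qchi (g x)) ^ 2
      = ∑ x : Fin n → ZMod 2, ∑ z : Fin n → ZMod 2, qchi (g x) * qchi (g (x + z)) := by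
    rw [sq, Finset.sum_mul_sum]
    refine Finset.sum_congr rfl (fun x _ => ?_)
    exact (Fintype.sum_equiv (Equiv.addLeft x)
      (fun z => qchi (g x) * qchi (g (x + z)))
      (fun y => qchi (g x) * qchi (g y)) (fun z => rfl)).symm
  have step2 : ∀ x z : Fin n → ZMod 2,
      qchi (g x) * qchi (g (x + z)) = qchi (g z) * qchi (x ⬝ᵥ (Q + Qᵀ) *ᵥ z) := by
    intro x z
    rw [← qchi_add, ← qchi_add]
    congr 1
    have h := key_id Q L w x z
    simp only [hg]
    rw [h]
    have h2 : (2 : ZMod 2) = 0 := rfl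
    linear_combination (w ⬝ᵥ x + (x ⬝ᵥ Q *ᵥ x + L ⬝ᵥ x)) * h2
  calc (∑ x : Fin n → ZMod 2, qchi (g x)) ^ 2
      = ∑ x : Fin n → ZMod 2, ∑ z : Fin n → ZMod 2, qchi (g z) * qchi (x ⬝ᵥ (Q + Qᵀ) *ᵥ z) := by
        rw [step1]; exact Finset.sum_congr rfl fun x _ => Finset.sum_congr rfl fun z _ => step2 x z
    _ = ∑ z : Fin n → ZMod 2, qchi (g z) * ∑ x : Fin n → ZMod 2, qchi (x ⬝ᵥ (Q + Qᵀ) *ᵥ z) := by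
        rw [Finset.sum_comm]
        exact Finset.sum_congr rfl fun z _ => by rw [Finset.mul_sum]
    _ = ∑ z : Fin n → ZMod 2, qchi (g z) * (if (Q + Qᵀ) *ᵥ z = 0 then (2:ℝ)^n else 0) := by
        exact Finset.sum_congr rfl fun z _ => by rw [sum_qchi_dot_ite]
    _ = (2:ℝ)^n * ∑ z ∈ Finset.univ.filter (fun z : Fin n → ZMod 2 => (Q + Qᵀ) *ᵥ z = 0),
          qchi (g z) := by
        rw [Finset.mul_sum, Finset.sum_filter]
        exact Finset.sum_congr rfl fun z _ => by split_ifs <;> ring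

lemma card_ker {n h : ℕ} (B : Matrix (Fin n) (Fin n) (ZMod 2)) (hrank : B.rank = 2 * h) :
    (Finset.univ.filter (fun z : Fin n → ZMod 2 => B *ᵥ z = 0)).card = 2 ^ (n - 2 * h)
      ∧ 2 * h ≤ n := by
  have hfr : Module.finrank (ZMod 2) (Fin n → ZMod 2) = n := by
    simp [Module.finrank_pi]
  have hrn := LinearMap.finrank_range_add_finrank_ker B.mulVecLin
  rw [hfr] at hrn
  have hrank' : Module.finrank (ZMod 2) (LinearMap.range B.mulVecLin) = 2 * h := hrank
  have hle : 2 * h ≤ n := by omega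
  have hker : Module.finrank (ZMod 2) (LinearMap.ker B.mulVecLin) = n - 2 * h := by omega
  have hcard : Fintype.card (LinearMap.ker B.mulVecLin) = 2 ^ (n - 2 * h) := by
    rw [Module.card_eq_pow_finrank (K := ZMod 2), hker, ZMod.card]
  refine ⟨?_, hle⟩
  rw [← hcard, ← Fintype.card_subtype]
  exact Fintype.card_congr (Equiv.subtypeEquivRight fun z => by
    simp [LinearMap.mem_ker, Matrix.mulVecLin_apply])

/-- Dichotomy for the kernel sum. -/
lemma ker_sum_dichotomy {n : ℕ} (Q : Matrix (Fin n) (Fin n) (ZMod 2)) (L w : Fin n → ZMod 2) :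
    (∑ z ∈ Finset.univ.filter (fun z : Fin n → ZMod 2 => (Q + Qᵀ) *ᵥ z = 0),
        qchi (w ⬝ᵥ z + (z ⬝ᵥ Q *ᵥ z + L ⬝ᵥ z))) = 0 ∨
    (∑ z ∈ Finset.univ.filter (fun z : Fin n → ZMod 2 => (Q + Qᵀ) *ᵥ z = 0),
        qchi (w ⬝ᵥ z + (z ⬝ᵥ Q *ᵥ z + L ⬝ᵥ z)))
      = ((Finset.univ.filter (fun z : Fin n → ZMod 2 => (Q + Qᵀ) *ᵥ z = 0)).card : ℝ) := by
  set g : (Fin n → ZMod 2) → ZMod 2 := fun x => w ⬝ᵥ x + (x ⬝ᵥ Q *ᵥ x + L ⬝ᵥ x) with hg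
  set K := Finset.univ.filter (fun z : Fin n → ZMod 2 => (Q + Qᵀ) *ᵥ z = 0) with hK
  by_cases hz : ∃ z0 ∈ K, g z0 ≠ 0
  · left
    obtain ⟨z0, hz0K, hz0⟩ := hz
    have hz0mem : (Q + Qᵀ) *ᵥ z0 = 0 := by
      simpa [hK] using hz0K
    have hgz0 : g z0 = 1 := by
      have : ∀ a : ZMod 2, a ≠ 0 → a = 1 := by decide
      exact this _ hz0
    have hadd : ∀ z, z ∈ K → g (z + z0) = g z + 1 := by
      intro z hzK
      have := key_id Q L w z z0
      simp only [hg]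
      rw [this, hz0mem]
      simp only [dotProduct_zero, add_zero]
      rw [show (w ⬝ᵥ z0 + (z0 ⬝ᵥ Q *ᵥ z0 + L ⬝ᵥ z0)) = g z0 from rfl, hgz0]
    have hmem : ∀ z, z ∈ K → z + z0 ∈ K := by
      intro z hzK
      have h1 : (Q + Qᵀ) *ᵥ z = 0 := by simpa [hK] using hzK
      simp only [hK, Finset.mem_filter, Finset.mem_univ, true_and] at *
      rw [Matrix.mulVec_add, h1, hz0mem, add_zero]
    have hzz : z0 + z0 = 0 := by
      funext i; simp [CharTwo.add_self_eq_zero]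
    have key : ∑ z ∈ K, qchi (g z) = ∑ z ∈ K, qchi (g (z + z0)) := by
      refine Finset.sum_nbij' (fun z => z + z0) (fun z => z + z0) ?_ ?_ ?_ ?_ ?_
      · intro a ha; exact hmem a ha
      · intro a ha; exact hmem a ha
      · intro a _; show a + z0 + z0 = a; rw [add_assoc, hzz, add_zero]
      · intro a _; show a + z0 + z0 = a; rw [add_assoc, hzz, add_zero]
      · intro a _; show qchi (g a) = qchi (g (a + z0 + z0)); rw [add_assoc, hzz, add_zero]
    have key2 : ∀ z ∈ K, qchi (g (z + z0)) = - qchi (g z) := fun z hz => by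
      rw [hadd z hz, qchi_add_one]
    rw [Finset.sum_congr rfl key2, Finset.sum_neg_distrib] at key
    linarith
  · right
    push_neg at hz
    rw [Finset.card_eq_sum_ones, Nat.cast_sum]
    refine Finset.sum_congr rfl fun z hzK => ?_
    have h0 := hz z hzK
    simp only [hg] at h0
    rw [h0, qchi_zero]
    norm_num

/-- For a quadratic Boolean function whose symplectic matrix `B = Q + Qᵗ` has rank `2h`,
exactly `2^(2h)` Fourier coefficients are nonzero and each of them has absolute
value `2^(-h)`. -/
theorem quadratic_fourier_support (n h : ℕ) (Q : Matrix (Fin n) (Fin n) (ZMod 2))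
    (L : Fin n → ZMod 2) (hQ : ∀ i j : Fin n, j ≤ i → Q i j = 0)
    (hrank : (Q + Qᵀ).rank = 2 * h) :
    (Finset.univ.filter
        (fun w => fhat (fun x => x ⬝ᵥ Q.mulVec x + L ⬝ᵥ x) w ≠ 0)).card = 2 ^ (2 * h) ∧
    ∀ w, fhat (fun x => x ⬝ᵥ Q.mulVec x + L ⬝ᵥ x) w ≠ 0 →
      |fhat (fun x => x ⬝ᵥ Q.mulVec x + L ⬝ᵥ x) w| = ((2 : ℝ) ^ h)⁻¹ := by
  obtain ⟨hcardK, hle⟩ := card_ker (Q + Qᵀ) hrank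
  have h2n : ((2:ℝ)^n) ≠ 0 := by positivity
  have hfhat : ∀ w, fhat (fun x => x ⬝ᵥ Q.mulVec x + L ⬝ᵥ x) w
      = ((2:ℝ)^n)⁻¹ * ∑ x : Fin n → ZMod 2, qchi (w ⬝ᵥ x + (x ⬝ᵥ Q *ᵥ x + L ⬝ᵥ x)) :=
    fun w => rfl
  -- the squared Fourier coefficient in terms of the kernel sum
  have hsq : ∀ w, (fhat (fun x => x ⬝ᵥ Q.mulVec x + L ⬝ᵥ x) w) ^ 2
      = ((2:ℝ)^n)⁻¹ * ∑ z ∈ Finset.univ.filter (fun z : Fin n → ZMod 2 => (Q + Qᵀ) *ᵥ z = 0),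
          qchi (w ⬝ᵥ z + (z ⬝ᵥ Q *ᵥ z + L ⬝ᵥ z)) := by
    intro w
    rw [hfhat w, mul_pow, S_sq Q L w]
    field_simp
  -- if the coefficient is nonzero, its square is 2^(-2h)
  have hval : ∀ w, fhat (fun x => x ⬝ᵥ Q.mulVec x + L ⬝ᵥ x) w ≠ 0 →
      (fhat (fun x => x ⬝ᵥ Q.mulVec x + L ⬝ᵥ x) w) ^ 2 = ((2:ℝ)^(2*h))⁻¹ := by
    intro w hw
    rcases ker_sum_dichotomy Q L w with h0 | hcard
    · exfalso
      apply hw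
      have := hsq w
      rw [h0, mul_zero] at this
      exact pow_eq_zero_iff (n := 2) (by norm_num) |>.mp this
    · rw [hsq w, hcard, hcardK]
      have hsplit : (2:ℝ)^n = (2:ℝ)^(2*h) * (2:ℝ)^(n - 2*h) := by
        rw [← pow_add]
        congr 1
        omega
      rw [hsplit]
      push_cast
      rw [mul_inv]
      have hne : ((2:ℝ)^(n - 2*h)) ≠ 0 := by positivity
      field_simp
  -- Parseval : the squares sum to 1
  have hpars : ∑ w : Fin n → ZMod 2, (fhat (fun x => x ⬝ᵥ Q.mulVec x + L ⬝ᵥ x) w) ^ 2 = 1 := by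
    have hsum : ∑ w : Fin n → ZMod 2,
        ∑ z ∈ Finset.univ.filter (fun z : Fin n → ZMod 2 => (Q + Qᵀ) *ᵥ z = 0),
          qchi (w ⬝ᵥ z + (z ⬝ᵥ Q *ᵥ z + L ⬝ᵥ z)) = (2:ℝ)^n := by
      rw [Finset.sum_comm]
      have hterm : ∀ z : Fin n → ZMod 2,
          ∑ w : Fin n → ZMod 2, qchi (w ⬝ᵥ z + (z ⬝ᵥ Q *ᵥ z + L ⬝ᵥ z))
            = (if z = 0 then (2:ℝ)^n else 0) * qchi (z ⬝ᵥ Q *ᵥ z + L ⬝ᵥ z) := by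
        intro z
        rw [← sum_qchi_dot_ite z, Finset.sum_mul]
        exact Finset.sum_congr rfl fun w _ => by rw [← qchi_add]
      calc ∑ z ∈ Finset.univ.filter (fun z : Fin n → ZMod 2 => (Q + Qᵀ) *ᵥ z = 0),
            ∑ w : Fin n → ZMod 2, qchi (w ⬝ᵥ z + (z ⬝ᵥ Q *ᵥ z + L ⬝ᵥ z))
          = ∑ z ∈ Finset.univ.filter (fun z : Fin n → ZMod 2 => (Q + Qᵀ) *ᵥ z = 0),
            (if z = 0 then (2:ℝ)^n else 0) * qchi (z ⬝ᵥ Q *ᵥ z + L ⬝ᵥ z) :=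
            Finset.sum_congr rfl fun z _ => hterm z
        _ = (2:ℝ)^n := by
            rw [Finset.sum_eq_single 0]
            · simp [qchi_zero]
            · intro b _ hb
              simp [hb]
            · intro habs
              exfalso
              exact habs (by simp [Matrix.mulVec_zero])
    calc ∑ w : Fin n → ZMod 2, (fhat (fun x => x ⬝ᵥ Q.mulVec x + L ⬝ᵥ x) w) ^ 2
        = ((2:ℝ)^n)⁻¹ * ∑ w : Fin n → ZMod 2,
            ∑ z ∈ Finset.univ.filter (fun z : Fin n → ZMod 2 => (Q + Qᵀ) *ᵥ z = 0),
              qchi (w ⬝ᵥ z + (z ⬝ᵥ Q *ᵥ z + L ⬝ᵥ z)) := by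
          rw [Finset.mul_sum]
          exact Finset.sum_congr rfl fun w _ => hsq w
      _ = 1 := by rw [hsum]; field_simp
  constructor
  · -- counting
    have hsplit := Finset.sum_filter_add_sum_filter_not Finset.univ
      (fun w => fhat (fun x => x ⬝ᵥ Q.mulVec x + L ⬝ᵥ x) w ≠ 0)
      (fun w => (fhat (fun x => x ⬝ᵥ Q.mulVec x + L ⬝ᵥ x) w) ^ 2)
    have hzero : ∑ w ∈ Finset.univ.filter
        (fun w => ¬ fhat (fun x => x ⬝ᵥ Q.mulVec x + L ⬝ᵥ x) w ≠ 0),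
        (fhat (fun x => x ⬝ᵥ Q.mulVec x + L ⬝ᵥ x) w) ^ 2 = 0 := by
      refine Finset.sum_eq_zero fun w hw => ?_
      rw [Finset.mem_filter] at hw
      push_neg at hw
      rw [hw.2]
      ring
    have hconst : ∑ w ∈ Finset.univ.filter
        (fun w => fhat (fun x => x ⬝ᵥ Q.mulVec x + L ⬝ᵥ x) w ≠ 0),
        (fhat (fun x => x ⬝ᵥ Q.mulVec x + L ⬝ᵥ x) w) ^ 2
        = ((Finset.univ.filter
            (fun w => fhat (fun x => x ⬝ᵥ Q.mulVec x + L ⬝ᵥ x) w ≠ 0)).card : ℝ)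
          * ((2:ℝ)^(2*h))⁻¹ := by
      rw [Finset.sum_congr rfl (fun w hw => hval w (Finset.mem_filter.mp hw).2),
        Finset.sum_const, nsmul_eq_mul]
    rw [hzero, add_zero, hconst] at hsplit
    rw [hpars] at hsplit
    have : ((Finset.univ.filter
        (fun w => fhat (fun x => x ⬝ᵥ Q.mulVec x + L ⬝ᵥ x) w ≠ 0)).card : ℝ)
        = (2:ℝ)^(2*h) := by
      have h2h : ((2:ℝ)^(2*h)) ≠ 0 := by positivity
      field_simp at hsplit
      linarith
    have h2 : ((2:ℝ)^(2*h)) = ((2^(2*h) : ℕ) : ℝ) := by push_cast; ring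
    rw [h2] at this
    exact_mod_cast this
  · -- absolute value
    intro w hw
    have habs : |fhat (fun x => x ⬝ᵥ Q.mulVec x + L ⬝ᵥ x) w|
        = Real.sqrt ((fhat (fun x => x ⬝ᵥ Q.mulVec x + L ⬝ᵥ x) w) ^ 2) := by
      rw [Real.sqrt_sq_eq_abs]
    rw [habs, hval w hw]
    rw [show ((2:ℝ)^(2*h))⁻¹ = (((2:ℝ)^h)⁻¹)^2 by rw [inv_pow, ← pow_mul, Nat.mul_comm h 2]]
    exact Real.sqrt_sq (by positivity)
end

section
/- Hidden shift algorithm correctness for bent functions: if f: Z_2^n → Z_2 is bent with dual f̃, and g(x) = f(x+s), then the state H^{⊗n}·D_{f̃}·H^{⊗n}·|ψ_g⟩, where |ψ_g⟩ = 2^{-n/2} Σ_x (-1)^{g(x)}|x⟩ and D_{f̃}|w⟩ = (-1)^{f̃(w)}|w⟩, equals ±|s⟩. -/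
open Finset Matrix

/-- The Hadamard transform `H^{⊗n}` acting on vectors indexed by `Z_2^n`. -/
noncomputable def hadamard {n : ℕ} (v : (Fin n → ZMod 2) → ℝ) :
    (Fin n → ZMod 2) → ℝ :=
  fun w => (Real.sqrt 2 ^ n)⁻¹ * ∑ x : Fin n → ZMod 2, (-1 : ℝ) ^ ((w ⬝ᵥ x).val) * v x

/-- The diagonal phase operator `D_{f̃} : |w⟩ ↦ (-1)^(f̃ w) |w⟩`. -/
def phaseOp {n : ℕ} (ft : (Fin n → ZMod 2) → ZMod 2) (v : (Fin n → ZMod 2) → ℝ) :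
    (Fin n → ZMod 2) → ℝ :=
  fun w => (-1 : ℝ) ^ ((ft w).val) * v w

lemma zmod2_eq_one (a : ZMod 2) (h : a ≠ 0) : a = 1 := by
  revert h; revert a; decide

lemma sign_add (a b : ZMod 2) : (-1:ℝ)^((a+b).val) = (-1)^a.val * (-1)^b.val := by
  rcases (show a = 0 ∨ a = 1 by revert a; decide) with rfl | rfl <;>
  rcases (show b = 0 ∨ b = 1 by revert b; decide) with rfl | rfl <;>
    simp [ZMod.val_one, show ((1:ZMod 2)+1)=0 from rfl]

lemma sqrt_pow_sq (n : ℕ) : Real.sqrt 2 ^ n * Real.sqrt 2 ^ n = 2 ^ n := by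
  rw [← mul_pow, Real.mul_self_sqrt (by norm_num)]

lemma sqrt_pow_pos (n : ℕ) : (0:ℝ) < Real.sqrt 2 ^ n :=
  pow_pos (Real.sqrt_pos.2 (by norm_num)) n

lemma sum_sign (n : ℕ) (v : Fin n → ZMod 2) :
    ∑ x : Fin n → ZMod 2, (-1:ℝ)^((v ⬝ᵥ x).val) = if v = 0 then (2:ℝ)^n else 0 := by
  split_ifs with h
  · subst h
    simp [zero_dotProduct, Finset.card_univ, ZMod.card]
  · obtain ⟨i, hi⟩ := Function.ne_iff.mp h
    have hv1 : v i = 1 := zmod2_eq_one _ (by simpa using hi)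
    have hsum : ∑ x : Fin n → ZMod 2, (-1:ℝ)^((v ⬝ᵥ (x + Pi.single i 1)).val)
        = ∑ x : Fin n → ZMod 2, (-1:ℝ)^((v ⬝ᵥ x).val) :=
      Fintype.sum_equiv (Equiv.addRight (Pi.single i 1)) _ _ (fun x => rfl)
    have hneg : ∀ x : Fin n → ZMod 2,
        (-1:ℝ)^((v ⬝ᵥ (x + Pi.single i 1)).val) = -(-1:ℝ)^((v ⬝ᵥ x).val) := by
      intro x
      rw [dotProduct_add, dotProduct_single, hv1, sign_add]
      simp [ZMod.val_one]
    rw [Finset.sum_congr rfl (fun x _ => hneg x), Finset.sum_neg_distrib] at hsum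
    linarith

/-- Correctness of the standard hidden shift algorithm for bent functions:
applying `H^{⊗n} D_{f̃} H^{⊗n}` to `|ψ_g⟩ = 2^(-n/2) Σ_x (-1)^(f(x+s)) |x⟩`
yields `±|s⟩`. -/
theorem hidden_shift_bent (n : ℕ) (f ft : (Fin n → ZMod 2) → ZMod 2)
    (hbent : ∀ w, |fhat f w| = (Real.sqrt 2 ^ n)⁻¹)
    (hdual : ∀ w, (-1 : ℝ) ^ ((ft w).val) = Real.sqrt 2 ^ n * fhat f w)
    (s : Fin n → ZMod 2) :
    ∃ c : ℝ, (c = 1 ∨ c = -1) ∧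
      hadamard (phaseOp ft (hadamard
          (fun x => (Real.sqrt 2 ^ n)⁻¹ * (-1 : ℝ) ^ ((f (x + s)).val))))
        = fun x => if x = s then c else 0 := by
  have hr := sqrt_pow_pos n
  have hr2 := sqrt_pow_sq n
  have hss : s + s = 0 := by
    funext i; exact CharTwo.add_self_eq_zero _
  -- step 1: first Hadamard
  have h1 : hadamard (fun x => (Real.sqrt 2 ^ n)⁻¹ * (-1 : ℝ) ^ ((f (x + s)).val))
      = fun w => (-1:ℝ)^((w ⬝ᵥ s).val) * fhat f w := by
    funext w
    unfold _root_.hadamard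
    have hre : ∑ x : Fin n → ZMod 2,
          (-1 : ℝ) ^ ((w ⬝ᵥ x).val) * ((Real.sqrt 2 ^ n)⁻¹ * (-1 : ℝ) ^ ((f (x + s)).val))
        = ∑ y : Fin n → ZMod 2,
          (-1 : ℝ) ^ ((w ⬝ᵥ (y + s)).val) * ((Real.sqrt 2 ^ n)⁻¹ * (-1 : ℝ) ^ ((f y).val)) := by
      refine Fintype.sum_equiv (Equiv.addRight s) _ _ (fun y => ?_)
      simp [add_assoc, hss]
    rw [hre]
    have hterm : ∀ y : Fin n → ZMod 2,
        (-1 : ℝ) ^ ((w ⬝ᵥ (y + s)).val) * ((Real.sqrt 2 ^ n)⁻¹ * (-1 : ℝ) ^ ((f y).val))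
        = (-1:ℝ)^((w ⬝ᵥ s).val) * (Real.sqrt 2 ^ n)⁻¹ * (-1:ℝ)^((w ⬝ᵥ y + f y).val) := by
      intro y
      rw [dotProduct_add, sign_add, sign_add]
      ring
    rw [Finset.sum_congr rfl (fun y _ => hterm y), ← Finset.mul_sum]
    unfold fhat
    have : (Real.sqrt 2 ^ n)⁻¹ * ((Real.sqrt 2 ^ n)⁻¹) = ((2:ℝ)^n)⁻¹ := by
      rw [← mul_inv, hr2]
    rw [← this]
    ring
  rw [h1]
  -- step 2: phase op
  have h2 : phaseOp ft (fun w => (-1:ℝ)^((w ⬝ᵥ s).val) * fhat f w)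
      = fun w => (Real.sqrt 2 ^ n)⁻¹ * (-1:ℝ)^((w ⬝ᵥ s).val) := by
    funext w
    unfold phaseOp
    rw [hdual w]
    have hsq : fhat f w * fhat f w = ((2:ℝ)^n)⁻¹ := by
      have := hbent w
      have : fhat f w * fhat f w = |fhat f w| * |fhat f w| := by
        rw [← abs_mul, abs_mul_self]
      rw [this, hbent w, ← mul_inv, hr2]
    have : Real.sqrt 2 ^ n * ((2:ℝ)^n)⁻¹ = (Real.sqrt 2 ^ n)⁻¹ := by
      rw [← hr2, mul_inv]
      field_simp
    calc Real.sqrt 2 ^ n * fhat f w * ((-1:ℝ)^((w ⬝ᵥ s).val) * fhat f w)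
        = Real.sqrt 2 ^ n * (fhat f w * fhat f w) * (-1:ℝ)^((w ⬝ᵥ s).val) := by ring
      _ = (Real.sqrt 2 ^ n)⁻¹ * (-1:ℝ)^((w ⬝ᵥ s).val) := by rw [hsq, this]
  rw [h2]
  -- step 3: final Hadamard
  refine ⟨1, Or.inl rfl, ?_⟩
  funext x
  unfold _root_.hadamard
  have hterm : ∀ w : Fin n → ZMod 2,
      (-1 : ℝ) ^ ((x ⬝ᵥ w).val) * ((Real.sqrt 2 ^ n)⁻¹ * (-1:ℝ)^((w ⬝ᵥ s).val))
      = (Real.sqrt 2 ^ n)⁻¹ * (-1:ℝ)^(((x + s) ⬝ᵥ w).val) := by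
    intro w
    rw [add_dotProduct, sign_add, dotProduct_comm s w]
    ring
  rw [Finset.sum_congr rfl (fun w _ => hterm w), ← Finset.mul_sum, sum_sign]
  have hx : (x + s = 0) ↔ (x = s) := by
    constructor
    · intro h
      have := congrArg (· + s) h
      simpa [add_assoc, hss] using this
    · rintro rfl; exact hss
  by_cases hxs : x = s
  · rw [if_pos (hx.2 hxs), if_pos hxs]
    field_simp [← hr2]
    rw [sq, hr2]
  · rw [if_neg (fun h => hxs (hx.1 h)), if_neg hxs]
    simp
end
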